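/- Let m, n ≥ 1 be integers, A ∈ ℝ^{m×n}, and b ∈ ℝ^m with b_j > 0 for every j. Let ρ ≥ 1, 0 < η < 1/2, and let T ≥ 1 be an integer with T ≥ ρ·η^{−2}·ln m. Suppose x¹, …, x^T ∈ ℝ^n and y¹, …, y^T ∈ ℝ^m satisfy: y¹_j = 1 for all j; for every t ≤ T, 0 ≤ (A x^t)_j ≤ ρ·b_j for all j and Σ_j y^t_j·(A x^t)_j / b_j ≤ Σ_j y^t_j (the width-ρ oracle condition, the normalized form of y^t·Ax^t ≤ y^t·b); and y^{t+1}_j = (1 + η·(A x^t)_j/(ρ·b_j))·y^t_j for all j and all 1 ≤ t < T. Then the average x̄ = (x¹ + ⋯ + x^T)/T satisfies (A x̄)_j ≤ (1 + 4η)·b_j for every j. -/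

import Mathlib

open Matrix Finset

private lemma exp_sub_sq_le (z : ℝ) (hz : 0 ≤ z) : Real.exp (z - z ^ 2) ≤ 1 + z := by
  have h1 : (0:ℝ) < 1 + z := by linarith
  have hinv := Real.log_le_sub_one_of_pos (inv_pos.mpr h1)
  rw [Real.log_inv] at hinv
  have h3 : 1 - (1 + z)⁻¹ ≤ Real.log (1 + z) := by linarith
  have h4 : z - z ^ 2 ≤ 1 - (1 + z)⁻¹ := by
    have he : (1:ℝ) - (1 + z)⁻¹ = z / (1 + z) := by field_simp; ring
    rw [he, le_div_iff₀ h1]; nlinarith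
  calc Real.exp (z - z ^ 2) ≤ Real.exp (Real.log (1 + z)) :=
        Real.exp_le_exp.mpr (by linarith)
    _ = 1 + z := Real.exp_log h1

/-- **Multiplicative weights / Plotkin–Shmoys–Tardos guarantee (Theorem 7).**
If a width-`ρ` oracle is consulted for `T ≥ ρ·η⁻²·ln m` rounds (rounds indexed
`0, …, T−1`), producing points `x⁰, …, x^{T−1}` while the row weights `y` are updated
multiplicatively, then the average point `x̄` satisfies `A x̄ ≤ (1 + 4η) b`. -/
theorem multiplicative_weights {m n : ℕ} (hm : 1 ≤ m) (hn : 1 ≤ n)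
    (A : Matrix (Fin m) (Fin n) ℝ) (b : Fin m → ℝ) (hb : ∀ j, 0 < b j)
    (ρ : ℝ) (hρ : 1 ≤ ρ) (η : ℝ) (hη0 : 0 < η) (hη : η < 1 / 2)
    (T : ℕ) (hT1 : 1 ≤ T) (hT : ρ * η⁻¹ ^ 2 * Real.log m ≤ T)
    (x : ℕ → Fin n → ℝ) (y : ℕ → Fin m → ℝ)
    (hy0 : ∀ j, y 0 j = 1)
    (hwidth : ∀ t < T, ∀ j, 0 ≤ A.mulVec (x t) j ∧ A.mulVec (x t) j ≤ ρ * b j)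
    (horacle : ∀ t < T, ∑ j, y t j * (A.mulVec (x t) j / b j) ≤ ∑ j, y t j)
    (hupdate : ∀ t < T, ∀ j,
      y (t + 1) j = (1 + η * (A.mulVec (x t) j / (ρ * b j))) * y t j) :
    ∀ j, A.mulVec ((T : ℝ)⁻¹ • ∑ t ∈ range T, x t) j ≤ (1 + 4 * η) * b j := by
  have hρ0 : (0:ℝ) < ρ := lt_of_lt_of_le one_pos hρ
  have hbρ : ∀ j, (0:ℝ) < ρ * b j := fun j => mul_pos hρ0 (hb j)
  set g : ℕ → Fin m → ℝ := fun t j => A.mulVec (x t) j / (ρ * b j) with hg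
  have hg01 : ∀ t < T, ∀ j, 0 ≤ g t j ∧ g t j ≤ 1 := by
    intro t ht j
    obtain ⟨h1, h2⟩ := hwidth t ht j
    exact ⟨div_nonneg h1 (hbρ j).le, (div_le_one (hbρ j)).mpr h2⟩
  -- product formula and positivity
  have hyprod : ∀ t, t ≤ T → ∀ j, y t j = ∏ s ∈ range t, (1 + η * g s j) := by
    intro t
    induction t with
    | zero => intro _ j; simpa using hy0 j
    | succ t ih =>
      intro ht j
      have ht' : t < T := lt_of_lt_of_le (Nat.lt_succ_self t) ht
      rw [hupdate t ht' j, ih (le_of_lt ht') j, Finset.prod_range_succ, mul_comm]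
  have hypos : ∀ t, t ≤ T → ∀ j, 0 < y t j := by
    intro t ht j
    rw [hyprod t ht j]
    apply Finset.prod_pos
    intro s hs
    have hs' : s < T := lt_of_lt_of_le (Finset.mem_range.mp hs) ht
    have := (hg01 s hs' j).1
    nlinarith
  -- potential bound
  have hPhi : ∀ t, t ≤ T → ∑ j, y t j ≤ (m : ℝ) * Real.exp (η * t / ρ) := by
    intro t
    induction t with
    | zero => intro _; simp [hy0]
    | succ t ih =>
      intro ht
      have ht' : t < T := lt_of_lt_of_le (Nat.lt_succ_self t) ht
      have hPt := ih (le_of_lt ht')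
      have hPpos : 0 < ∑ j, y t j := by
        apply Finset.sum_pos (fun j _ => hypos t (le_of_lt ht') j)
        exact Finset.univ_nonempty_iff.mpr (by
          have : 0 < m := hm
          exact ⟨⟨0, this⟩⟩)
      have hsum : ∑ j, y (t+1) j = (∑ j, y t j) + η * ∑ j, y t j * g t j := by
        rw [Finset.mul_sum, ← Finset.sum_add_distrib]
        apply Finset.sum_congr rfl
        intro j _
        rw [hupdate t ht' j]; ring
      have hab : ∀ j, A.mulVec (x t) j / b j = ρ * g t j := by
        intro j
        simp only [hg]
        rw [mul_div_assoc', mul_div_mul_left _ _ hρ0.ne']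
      have horc : ρ * ∑ j, y t j * g t j ≤ ∑ j, y t j := by
        have := horacle t ht'
        calc ρ * ∑ j, y t j * g t j = ∑ j, y t j * (A.mulVec (x t) j / b j) := by
              rw [Finset.mul_sum]
              exact Finset.sum_congr rfl (fun j _ => by rw [hab j]; ring)
          _ ≤ ∑ j, y t j := this
      have hstep : ∑ j, y (t+1) j ≤ (∑ j, y t j) * (1 + η / ρ) := by
        rw [hsum]
        have : η * ∑ j, y t j * g t j ≤ η / ρ * ∑ j, y t j := by
          rw [div_mul_eq_mul_div, le_div_iff₀ hρ0]
          nlinarith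
        linarith [this]
      have hexp1 : (1 : ℝ) + η / ρ ≤ Real.exp (η / ρ) := by
        linarith [Real.add_one_le_exp (η / ρ)]
      have hcast : ((t + 1 : ℕ) : ℝ) = (t : ℝ) + 1 := by push_cast; ring
      rw [hcast]
      calc ∑ j, y (t+1) j ≤ (∑ j, y t j) * (1 + η / ρ) := hstep
        _ ≤ ((m : ℝ) * Real.exp (η * t / ρ)) * Real.exp (η / ρ) := by
            apply mul_le_mul hPt hexp1 (by positivity) (by positivity)
        _ = (m : ℝ) * Real.exp (η * ((t : ℝ) + 1) / ρ) := by
            rw [mul_assoc, ← Real.exp_add]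
            congr 1
            field_simp
  intro j
  set S : ℝ := ∑ t ∈ range T, g t j with hSdef
  have hS0 : 0 ≤ S := Finset.sum_nonneg fun t ht =>
    (hg01 t (Finset.mem_range.mp ht) j).1
  -- lower bound on y T j
  have hlow : Real.exp (η * (1 - η) * S) ≤ y T j := by
    rw [hyprod T le_rfl j, hSdef, Finset.mul_sum, Real.exp_sum]
    apply Finset.prod_le_prod (fun t _ => (Real.exp_pos _).le)
    intro t ht
    have ht' := Finset.mem_range.mp ht
    obtain ⟨hg0, hg1⟩ := hg01 t ht' j
    have h1 : η * (1 - η) * g t j ≤ η * g t j - (η * g t j) ^ 2 := by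
      nlinarith [mul_nonneg (sq_nonneg η) (mul_nonneg hg0 (by linarith : (0:ℝ) ≤ 1 - g t j))]
    calc Real.exp (η * (1 - η) * g t j) ≤ Real.exp (η * g t j - (η * g t j) ^ 2) :=
          Real.exp_le_exp.mpr h1
      _ ≤ 1 + η * g t j := exp_sub_sq_le _ (by positivity)
  have hyle : y T j ≤ ∑ i, y T i :=
    Finset.single_le_sum (fun i _ => (hypos T le_rfl i).le) (Finset.mem_univ j)
  have hm1 : (1:ℝ) ≤ (m:ℝ) := by exact_mod_cast hm
  have hmpos : (0:ℝ) < m := lt_of_lt_of_le one_pos hm1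
  have hkey : η * (1 - η) * S ≤ Real.log m + η * T / ρ := by
    have hchain : Real.exp (η * (1 - η) * S) ≤ (m:ℝ) * Real.exp (η * T / ρ) :=
      le_trans hlow (le_trans hyle (hPhi T le_rfl))
    have : (m:ℝ) * Real.exp (η * T / ρ) = Real.exp (Real.log m + η * T / ρ) := by
      rw [Real.exp_add, Real.exp_log hmpos]
    rw [this] at hchain
    exact Real.exp_le_exp.mp hchain
  have hlogm : 0 ≤ Real.log m := Real.log_nonneg hm1
  have hTpos : (0:ℝ) < T := by exact_mod_cast hT1
  have hρlog : ρ * Real.log m ≤ η ^ 2 * T := by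
    have := mul_le_mul_of_nonneg_left hT (le_of_lt (by positivity : (0:ℝ) < η ^ 2))
    calc ρ * Real.log m = η ^ 2 * (ρ * η⁻¹ ^ 2 * Real.log m) := by
          field_simp
        _ ≤ η ^ 2 * T := this
  have hmain : ρ * S ≤ (1 + 4 * η) * T := by
    have h1 : ρ * (η * (1 - η) * S) ≤ ρ * (Real.log m + η * T / ρ) :=
      mul_le_mul_of_nonneg_left hkey hρ0.le
    have h2 : ρ * (Real.log m + η * T / ρ) = ρ * Real.log m + η * T := by
      field_simp
    have h3 : η * ((1 - η) * (ρ * S)) ≤ η * ((1 + η) * T) := by nlinarith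
    have h4 : (1 - η) * (ρ * S) ≤ (1 + η) * T := le_of_mul_le_mul_left h3 hη0
    have h6 : (1 + η) * T ≤ (1 - η) * ((1 + 4 * η) * T) := by
      nlinarith [mul_nonneg (mul_nonneg hη0.le (by linarith : (0:ℝ) ≤ 1 - 2 * η)) hTpos.le]
    have h7 : (0:ℝ) < 1 - η := by linarith
    exact le_of_mul_le_mul_left (h4.trans h6) h7
  -- rewrite the LHS
  have hlin : A.mulVec ((T : ℝ)⁻¹ • ∑ t ∈ range T, x t) j
      = (T : ℝ)⁻¹ * ∑ t ∈ range T, A.mulVec (x t) j := by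
    simp only [Matrix.mulVec, dotProduct, Pi.smul_apply, Finset.sum_apply,
      smul_eq_mul, Finset.mul_sum]
    rw [Finset.sum_comm]
    apply Finset.sum_congr rfl
    intro t _
    apply Finset.sum_congr rfl
    intro i _
    ring
  have hAx : ∀ t ∈ range T, A.mulVec (x t) j = ρ * b j * g t j := by
    intro t ht
    simp only [hg]
    rw [mul_comm, div_mul_cancel₀ _ (hbρ j).ne']
  rw [hlin, Finset.sum_congr rfl hAx, ← Finset.mul_sum, ← hSdef]
  rw [inv_mul_le_iff₀ hTpos]
  nlinarith [mul_le_mul_of_nonneg_left hmain (hb j).le]
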